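/- arXiv:math/0202064 — 2 statements merged into one kernel-verified Lean document; each statement's English description precedes it below -/
import Mathlib

section
/- For every integer n ≥ 2 and every p ∈ ℤ^{3n−1} with a_n ≥ 0, b_n ≥ 0, c_n ≥ 0 and a_n + b_n − c_n ≥ 0, one has L(p) = (a_n! b_n!)/(c_n! (a_n + b_n − c_n)!) · L(χ(p)), where χ is the automorphism of ℤ^{3n−1} fixing all coordinates except that it exchanges a_n and c_n and replaces b_n by a_n + b_n − c_n. (The equality holds in [0,∞].) -/
open MeasureTheory Finset
open scoped ENNReal

noncomputable section

/-- The unit cube `[0,1]^n`. -/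
def cube (n : ℕ) : Set (Fin n → ℝ) := Set.univ.pi fun _ => Set.Icc (0:ℝ) 1

/-- The `k`-th coordinate (1-based indexing) of `x`. -/
def ent {n : ℕ} (x : Fin n → ℝ) (k : ℕ) : ℝ := if h : k - 1 < n then x ⟨k - 1, h⟩ else 0

/-- `δ_k(x) = 1 - x_k δ_{k-1}(x)`, with `δ_0 = 1`. -/
def delta {n : ℕ} (x : Fin n → ℝ) : ℕ → ℝ
  | 0 => 1
  | k + 1 => 1 - ent x (k + 1) * delta x k

/-- The integral `L(p)` for `p = (a_1,…,a_n,b_1,…,b_n,c_2,…,c_n)`. -/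
def Lint (n : ℕ) (a b c : ℕ → ℤ) : ℝ≥0∞ :=
  ∫⁻ x in cube n, ENNReal.ofReal
    ((∏ k ∈ Icc 1 n, ent x k ^ a k * (1 - ent x k) ^ b k) /
      ((∏ k ∈ Icc 2 n, delta x k ^ c k) * delta x n))

/-! ### Auxiliary lemmas -/

lemma measurable_ent {n : ℕ} (k : ℕ) : Measurable fun x : Fin n → ℝ => ent x k := by
  unfold ent
  split
  · exact measurable_pi_apply _
  · exact measurable_const

lemma measurable_delta {n : ℕ} (k : ℕ) : Measurable fun x : Fin n → ℝ => delta x k := by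
  induction k with
  | zero => exact measurable_const
  | succ k ih =>
      show Measurable fun x : Fin n → ℝ => 1 - ent x (k+1) * delta x k
      exact measurable_const.sub ((measurable_ent (k+1)).mul ih)

lemma ent_mem_of_cube {n : ℕ} {x : Fin n → ℝ} (hx : x ∈ cube n) (k : ℕ) :
    ent x k ∈ Set.Icc (0:ℝ) 1 := by
  unfold ent
  split
  · exact hx _ trivial
  · exact ⟨le_refl 0, zero_le_one⟩

lemma delta_mem_of_cube {n : ℕ} {x : Fin n → ℝ} (hx : x ∈ cube n) (k : ℕ) :
    delta x k ∈ Set.Icc (0:ℝ) 1 := by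
  induction k with
  | zero => exact ⟨zero_le_one, le_refl 1⟩
  | succ k ih =>
      obtain ⟨he0, he1⟩ := ent_mem_of_cube hx (k+1)
      obtain ⟨hd0, hd1⟩ := ih
      constructor
      · simp only [delta]; nlinarith
      · simp only [delta]; nlinarith

lemma cube_restrict (n : ℕ) : (volume : Measure (Fin n → ℝ)).restrict (cube n) =
    Measure.pi (fun _ => volume.restrict (Set.Icc (0:ℝ) 1)) := by
  refine (Measure.pi_eq fun s hs => ?_).symm
  rw [Measure.restrict_apply (MeasurableSet.univ_pi hs)]
  have : (Set.univ.pi s) ∩ cube n = Set.univ.pi (fun i => s i ∩ Set.Icc 0 1) := by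
    rw [cube, ← Set.pi_inter_distrib]
  rw [this, volume_pi_pi]
  exact Finset.prod_congr rfl fun i _ => (Measure.restrict_apply (hs i)).symm

/-! ### The Beta integral for natural exponents -/

lemma betaNat_integral (p q : ℕ) :
    ∫ y in (0:ℝ)..1, y ^ p * (1 - y) ^ q =
      p.factorial * q.factorial / (p + q + 1).factorial := by
  have hs : 0 < Complex.re ((p : ℂ) + 1) := by
    simp only [Complex.add_re, Complex.natCast_re, Complex.one_re]
    positivity
  have ht : 0 < Complex.re ((q : ℂ) + 1) := by
    simp only [Complex.add_re, Complex.natCast_re, Complex.one_re]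
    positivity
  have key := Complex.Gamma_mul_Gamma_eq_betaIntegral hs ht
  rw [Complex.Gamma_nat_eq_factorial, Complex.Gamma_nat_eq_factorial] at key
  have hsum : ((p : ℂ) + 1) + ((q : ℂ) + 1) = ((p + q + 1 : ℕ) : ℂ) + 1 := by push_cast; ring
  rw [hsum, Complex.Gamma_nat_eq_factorial] at key
  have hbeta : Complex.betaIntegral ((p : ℂ) + 1) ((q : ℂ) + 1) =
      ((∫ y in (0:ℝ)..1, y ^ p * (1 - y) ^ q : ℝ) : ℂ) := by
    rw [Complex.betaIntegral, ← intervalIntegral.integral_ofReal]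
    refine intervalIntegral.integral_congr fun x hx => ?_
    rw [add_sub_cancel_right, add_sub_cancel_right, Complex.cpow_natCast, Complex.cpow_natCast]
    push_cast
    ring
  rw [hbeta] at key
  have hne : ((p + q + 1).factorial : ℂ) ≠ 0 := by
    exact_mod_cast Nat.cast_ne_zero.mpr (p + q + 1).factorial_ne_zero
  rw [eq_comm, mul_comm] at key
  have h2 : ((∫ y in (0:ℝ)..1, y ^ p * (1 - y) ^ q : ℝ) : ℂ) =
      (p.factorial : ℂ) * q.factorial / (p + q + 1).factorial := by
    rw [eq_div_iff hne]; exact key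
  rw [← Complex.ofReal_inj]
  push_cast at h2 ⊢
  exact h2

lemma lintegral_betaNat (p q : ℕ) :
    ∫⁻ y in Set.Icc (0:ℝ) 1, ENNReal.ofReal (y ^ p * (1 - y) ^ q) =
      ENNReal.ofReal ((p.factorial : ℝ) * q.factorial / (p + q + 1).factorial) := by
  rw [← betaNat_integral p q, intervalIntegral.integral_of_le zero_le_one,
    ← Measure.restrict_congr_set Ioc_ae_eq_Icc]
  rw [← ofReal_integral_eq_lintegral_ofReal]
  · exact (Continuous.integrableOn_Ioc (by continuity))
  · filter_upwards [ae_restrict_mem measurableSet_Ioc] with y hy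
    have h1 : (0:ℝ) ≤ y := le_of_lt hy.1
    have h2 : (0:ℝ) ≤ 1 - y := by linarith [hy.2]
    positivity

/-! ### The one-dimensional integral `J` and its symmetry -/

/-- The 1-dimensional integral appearing after separating the last variable. -/
def Jint (A B C : ℕ) (t : ℝ) : ℝ≥0∞ :=
  ∫⁻ y in Set.Icc (0:ℝ) 1, ENNReal.ofReal (y ^ A * (1 - y) ^ B / (1 - y * t) ^ (C + 1))

lemma Jint_expand (A B C : ℕ) {t : ℝ} (ht : t ∈ Set.Icc (0:ℝ) 1) :
    Jint A B C t = ∑' k : ℕ, ENNReal.ofReal (((k + C).choose C : ℝ) * t ^ k) *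
      ENNReal.ofReal (((A + k).factorial : ℝ) * B.factorial / (A + k + B + 1).factorial) := by
  rw [Jint, ← Measure.restrict_congr_set Ico_ae_eq_Icc]
  have step : ∀ y ∈ Set.Ico (0:ℝ) 1,
      ENNReal.ofReal (y ^ A * (1 - y) ^ B / (1 - y * t) ^ (C + 1)) =
      ∑' k : ℕ, ENNReal.ofReal ((((k + C).choose C : ℝ) * t ^ k) * (y ^ (A + k) * (1 - y) ^ B)) := by
    intro y hy
    have hyt : ‖y * t‖ < 1 := by
      rw [Real.norm_eq_abs, abs_of_nonneg (mul_nonneg hy.1 ht.1)]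
      calc y * t ≤ y * 1 := mul_le_mul_of_nonneg_left ht.2 hy.1
        _ < 1 := by simpa using hy.2
    have hsum := hasSum_choose_mul_geometric_of_norm_lt_one C hyt
    have hsum2 : HasSum (fun k => (((k + C).choose C : ℝ) * t ^ k) * (y ^ (A + k) * (1 - y) ^ B))
        (y ^ A * (1 - y) ^ B / (1 - y * t) ^ (C + 1)) := by
      have h2 := hsum.mul_left (y ^ A * (1 - y) ^ B)
      rw [mul_one_div] at h2
      have hfun : (fun k : ℕ => (((k + C).choose C : ℝ) * t ^ k) * (y ^ (A + k) * (1 - y) ^ B)) =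
          fun i => y ^ A * (1 - y) ^ B * (((i + C).choose C : ℝ) * (y * t) ^ i) := by
        funext k
        rw [mul_pow, pow_add]
        ring
      rw [hfun]; exact h2
    rw [← hsum2.tsum_eq, ENNReal.ofReal_tsum_of_nonneg ?_ hsum2.summable]
    intro k
    exact mul_nonneg (mul_nonneg (Nat.cast_nonneg _) (pow_nonneg ht.1 _))
      (mul_nonneg (pow_nonneg hy.1 _) (pow_nonneg (by linarith [hy.2]) _))
  rw [setLIntegral_congr_fun measurableSet_Ico step]
  have hmeas : ∀ k : ℕ, Measurable fun y : ℝ =>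
      ENNReal.ofReal (((k + C).choose C : ℝ) * t ^ k * (y ^ (A + k) * (1 - y) ^ B)) := by
    intro k
    fun_prop
  rw [lintegral_tsum fun k => (hmeas k).aemeasurable]
  refine tsum_congr fun k => ?_
  have hc : (0:ℝ) ≤ ((k + C).choose C : ℝ) * t ^ k :=
    mul_nonneg (Nat.cast_nonneg _) (pow_nonneg ht.1 _)
  simp_rw [ENNReal.ofReal_mul hc]
  rw [lintegral_const_mul' _ _ ENNReal.ofReal_ne_top]
  congr 1
  rw [Measure.restrict_congr_set Ico_ae_eq_Icc]
  exact lintegral_betaNat (A + k) B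

lemma Jint_swap (A B C D : ℕ) (hS : A + B = C + D) {t : ℝ} (ht : t ∈ Set.Icc (0:ℝ) 1) :
    Jint A B C t = ENNReal.ofReal ((A.factorial * B.factorial : ℝ) /
      (C.factorial * D.factorial)) * Jint C D A t := by
  have key0 : ∀ k : ℕ, C.factorial * D.factorial *
      ((k + C).choose C * (A + k).factorial * B.factorial) =
      A.factorial * B.factorial * ((k + A).choose A * (C + k).factorial * D.factorial) := by
    intro k
    refine Nat.eq_of_mul_eq_mul_right (Nat.factorial_pos k) ?_
    have e1 : (k + C).choose C * C.factorial * k.factorial = (k + C).factorial := by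
      have := Nat.choose_mul_factorial_mul_factorial (Nat.le_add_left C k)
      rwa [Nat.add_sub_cancel] at this
    have e2 : (k + A).choose A * A.factorial * k.factorial = (k + A).factorial := by
      have := Nat.choose_mul_factorial_mul_factorial (Nat.le_add_left A k)
      rwa [Nat.add_sub_cancel] at this
    calc (C.factorial * D.factorial *
          ((k + C).choose C * (A + k).factorial * B.factorial)) * k.factorial
        = ((k + C).choose C * C.factorial * k.factorial) *
            (D.factorial * (A + k).factorial * B.factorial) := by ring
      _ = (k + C).factorial * (D.factorial * (A + k).factorial * B.factorial) := by rw [e1]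
      _ = ((k + A).choose A * A.factorial * k.factorial) *
            (B.factorial * (C + k).factorial * D.factorial) := by
          rw [e2, Nat.add_comm k C, Nat.add_comm k A]; ring
      _ = (A.factorial * B.factorial *
            ((k + A).choose A * (C + k).factorial * D.factorial)) * k.factorial := by ring
  rw [Jint_expand A B C ht, Jint_expand C D A ht, ← ENNReal.tsum_mul_left]
  refine tsum_congr fun k => ?_
  have ht0 := ht.1
  have hrw : C + k + D + 1 = A + k + B + 1 := by omega
  rw [hrw]
  rw [← ENNReal.ofReal_mul (by positivity), ← ENNReal.ofReal_mul (by positivity),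
    ← ENNReal.ofReal_mul (by positivity)]
  congr 1
  have key : (C.factorial * D.factorial *
      ((k + C).choose C * (A + k).factorial * B.factorial) : ℝ) =
      A.factorial * B.factorial * ((k + A).choose A * (C + k).factorial * D.factorial) := by
    exact_mod_cast congrArg (Nat.cast : ℕ → ℝ) (key0 k)
  have h1 : ((A + k + B + 1).factorial : ℝ) ≠ 0 := Nat.cast_ne_zero.mpr (Nat.factorial_ne_zero _)
  have h2 : (C.factorial : ℝ) ≠ 0 := Nat.cast_ne_zero.mpr (Nat.factorial_ne_zero _)
  have h3 : (D.factorial : ℝ) ≠ 0 := Nat.cast_ne_zero.mpr (Nat.factorial_ne_zero _)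
  field_simp
  have h4 : (B.factorial : ℝ) ≠ 0 := Nat.cast_ne_zero.mpr (Nat.factorial_ne_zero _)
  apply mul_right_cancel₀ (mul_ne_zero h4 h3)
  linear_combination t ^ k * key

/-! ### Separating the last variable -/

lemma ent_snoc (m : ℕ) (x' : Fin m → ℝ) (y : ℝ) {k : ℕ} (hk1 : 1 ≤ k) (hk : k ≤ m) :
    ent (Fin.snoc x' y : Fin (m+1) → ℝ) k = ent x' k := by
  have h1 : k - 1 < m := by omega
  have h2 : k - 1 < m + 1 := by omega
  unfold ent
  rw [dif_pos h2, dif_pos h1]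
  have hcast : (⟨k - 1, h2⟩ : Fin (m+1)) = Fin.castSucc ⟨k - 1, h1⟩ := by ext; simp
  rw [hcast, Fin.snoc_castSucc]

lemma ent_snoc_top (m : ℕ) (x' : Fin m → ℝ) (y : ℝ) :
    ent (Fin.snoc x' y : Fin (m+1) → ℝ) (m + 1) = y := by
  unfold ent
  rw [dif_pos (by omega : m + 1 - 1 < m + 1)]
  have hcast : (⟨m + 1 - 1, by omega⟩ : Fin (m+1)) = Fin.last m := by ext; simp
  rw [hcast, Fin.snoc_last]

lemma delta_snoc (m : ℕ) (x' : Fin m → ℝ) (y : ℝ) {k : ℕ} (hk : k ≤ m) :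
    delta (Fin.snoc x' y : Fin (m+1) → ℝ) k = delta x' k := by
  induction k with
  | zero => rfl
  | succ k ih =>
      show 1 - ent (Fin.snoc x' y : Fin (m+1) → ℝ) (k+1) *
          delta (Fin.snoc x' y : Fin (m+1) → ℝ) k = 1 - ent x' (k+1) * delta x' k
      rw [ent_snoc m x' y (by omega) (by omega), ih (by omega)]

lemma delta_snoc_top (m : ℕ) (x' : Fin m → ℝ) (y : ℝ) :
    delta (Fin.snoc x' y : Fin (m+1) → ℝ) (m + 1) = 1 - y * delta x' m := by
  show 1 - ent (Fin.snoc x' y : Fin (m+1) → ℝ) (m+1) *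
      delta (Fin.snoc x' y : Fin (m+1) → ℝ) m = _
  rw [ent_snoc_top, delta_snoc m x' y (le_refl m)]

lemma Lint_repr (m : ℕ) (hm : 1 ≤ m) (a b c : ℕ → ℤ) (A B C : ℕ)
    (hA : a (m+1) = (A:ℤ)) (hB : b (m+1) = (B:ℤ)) (hC : c (m+1) = (C:ℤ)) :
    Lint (m+1) a b c = ∫⁻ x in cube m, ENNReal.ofReal
      ((∏ k ∈ Icc 1 m, ent x k ^ a k * (1 - ent x k) ^ b k) /
        (∏ k ∈ Icc 2 m, delta x k ^ c k)) * Jint A B C (delta x m) := by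
  classical
  have hmeasf : Measurable fun x : Fin (m+1) → ℝ => ENNReal.ofReal
      ((∏ k ∈ Icc 1 (m+1), ent x k ^ a k * (1 - ent x k) ^ b k) /
        ((∏ k ∈ Icc 2 (m+1), delta x k ^ c k) * delta x (m+1))) := by
    apply Measurable.ennreal_ofReal
    apply Measurable.div
    · exact Finset.measurable_prod _ fun k _ =>
        ((measurable_ent k).pow_const _).mul ((measurable_const.sub (measurable_ent k)).pow_const _)
    · exact (Finset.measurable_prod _ fun k _ =>
        (measurable_delta k).pow_const _).mul (measurable_delta (m+1))
  set e := MeasurableEquiv.piFinSuccAbove (fun _ : Fin (m+1) => ℝ) (Fin.last m) with he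
  have hmp := (measurePreserving_piFinSuccAbove
    (fun _ : Fin (m+1) => (volume : Measure ℝ).restrict (Set.Icc 0 1)) (Fin.last m)).symm e
  rw [Lint, cube_restrict, ← hmp.lintegral_comp hmeasf]
  have hcomp : Measurable fun p : ℝ × (Fin m → ℝ) => ENNReal.ofReal
      ((∏ k ∈ Icc 1 (m+1), ent (e.symm p) k ^ a k * (1 - ent (e.symm p) k) ^ b k) /
        ((∏ k ∈ Icc 2 (m+1), delta (e.symm p) k ^ c k) * delta (e.symm p) (m+1))) :=
    hmeasf.comp e.symm.measurable
  rw [lintegral_prod_symm _ hcomp.aemeasurable]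
  have hpi : (Measure.pi fun j : Fin m =>
      (fun _ : Fin (m+1) => (volume : Measure ℝ).restrict (Set.Icc 0 1)) ((Fin.last m).succAbove j))
      = (volume : Measure (Fin m → ℝ)).restrict (cube m) := (cube_restrict m).symm
  rw [hpi]
  refine setLIntegral_congr_fun (MeasurableSet.univ_pi fun _ => measurableSet_Icc)
    (fun x' hx' => ?_)
  have hes : ∀ y : ℝ, (e.symm (y, x') : Fin (m+1) → ℝ) = Fin.snoc x' y := by
    intro y
    rw [he]
    simp [MeasurableEquiv.piFinSuccAbove, Fin.insertNth_last', Fin.snocEquiv]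
  -- nonnegativity of the constant factor
  have hnum : (0:ℝ) ≤ ∏ k ∈ Icc 1 m, ent x' k ^ a k * (1 - ent x' k) ^ b k :=
    Finset.prod_nonneg fun k _ => mul_nonneg
      (zpow_nonneg (ent_mem_of_cube hx' k).1 _)
      (zpow_nonneg (by linarith [(ent_mem_of_cube hx' k).2]) _)
  have hden : (0:ℝ) ≤ ∏ k ∈ Icc 2 m, delta x' k ^ c k :=
    Finset.prod_nonneg fun k _ => zpow_nonneg (delta_mem_of_cube hx' k).1 _
  have hK : (0:ℝ) ≤ (∏ k ∈ Icc 1 m, ent x' k ^ a k * (1 - ent x' k) ^ b k) /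
      (∏ k ∈ Icc 2 m, delta x' k ^ c k) := div_nonneg hnum hden
  calc ∫⁻ y in Set.Icc (0:ℝ) 1, ENNReal.ofReal
        ((∏ k ∈ Icc 1 (m+1), ent (e.symm (y, x')) k ^ a k * (1 - ent (e.symm (y, x')) k) ^ b k) /
          ((∏ k ∈ Icc 2 (m+1), delta (e.symm (y, x')) k ^ c k) * delta (e.symm (y, x')) (m+1)))
      = ∫⁻ y in Set.Icc (0:ℝ) 1, ENNReal.ofReal
          ((∏ k ∈ Icc 1 m, ent x' k ^ a k * (1 - ent x' k) ^ b k) /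
            (∏ k ∈ Icc 2 m, delta x' k ^ c k)) *
          ENNReal.ofReal (y ^ A * (1 - y) ^ B / (1 - y * delta x' m) ^ (C + 1)) := by
        refine lintegral_congr fun y => ?_
        rw [hes y, ← ENNReal.ofReal_mul hK]
        congr 1
        rw [Finset.prod_Icc_succ_top (by omega : 1 ≤ m + 1),
          Finset.prod_Icc_succ_top (by omega : 2 ≤ m + 1)]
        have hP : ∏ k ∈ Icc 1 m, ent (Fin.snoc x' y : Fin (m+1) → ℝ) k ^ a k *
            (1 - ent (Fin.snoc x' y : Fin (m+1) → ℝ) k) ^ b k =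
            ∏ k ∈ Icc 1 m, ent x' k ^ a k * (1 - ent x' k) ^ b k := by
          refine Finset.prod_congr rfl fun k hk => ?_
          rw [ent_snoc m x' y (mem_Icc.mp hk).1 (mem_Icc.mp hk).2]
        have hQ : ∏ k ∈ Icc 2 m, delta (Fin.snoc x' y : Fin (m+1) → ℝ) k ^ c k =
            ∏ k ∈ Icc 2 m, delta x' k ^ c k := by
          refine Finset.prod_congr rfl fun k hk => ?_
          rw [delta_snoc m x' y (mem_Icc.mp hk).2]
        rw [hP, hQ, ent_snoc_top, delta_snoc_top,
          hA, hB, hC, zpow_natCast, zpow_natCast, zpow_natCast]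
        rw [mul_assoc, ← pow_succ, mul_div_mul_comm]
    _ = ENNReal.ofReal
          ((∏ k ∈ Icc 1 m, ent x' k ^ a k * (1 - ent x' k) ^ b k) /
            (∏ k ∈ Icc 2 m, delta x' k ^ c k)) * Jint A B C (delta x' m) := by
        rw [lintegral_const_mul' _ _ ENNReal.ofReal_ne_top]
        rfl

theorem stmt11 (n : ℕ) (hn : 2 ≤ n) (a b c : ℕ → ℤ)
    (ha : 0 ≤ a n) (hb : 0 ≤ b n) (hc : 0 ≤ c n) (habc : 0 ≤ a n + b n - c n) :
    Lint n a b c =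
      ENNReal.ofReal
        ((Nat.factorial (a n).toNat * Nat.factorial (b n).toNat : ℝ) /
          (Nat.factorial (c n).toNat * Nat.factorial ((a n + b n - c n).toNat))) *
      Lint n (fun k => if k = n then c n else a k)
        (fun k => if k = n then a n + b n - c n else b k)
        (fun k => if k = n then a n else c k) := by
  obtain ⟨m, rfl⟩ : ∃ m, n = m + 1 := ⟨n - 1, by omega⟩
  have hm : 1 ≤ m := by omega
  set A := (a (m+1)).toNat with hA'
  set B := (b (m+1)).toNat with hB'
  set C := (c (m+1)).toNat with hC'
  set D := (a (m+1) + b (m+1) - c (m+1)).toNat with hD'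
  have hAi : a (m+1) = (A:ℤ) := (Int.toNat_of_nonneg ha).symm
  have hBi : b (m+1) = (B:ℤ) := (Int.toNat_of_nonneg hb).symm
  have hDi : a (m+1) + b (m+1) - c (m+1) = (D:ℤ) := (Int.toNat_of_nonneg habc).symm
  have hCi : c (m+1) = (C:ℤ) := (Int.toNat_of_nonneg hc).symm
  have hS : A + B = C + D := by omega
  rw [Lint_repr m hm a b c A B C hAi hBi hCi]
  rw [Lint_repr m hm _ _ _ C D A (by simp [hCi]) (by simp [hDi]) (by simp [hAi])]
  have hne : ∀ k ∈ Icc 1 m, k ≠ m + 1 := fun k hk => by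
    have := (mem_Icc.mp hk).2; omega
  have hne2 : ∀ k ∈ Icc 2 m, k ≠ m + 1 := fun k hk => by
    have := (mem_Icc.mp hk).2; omega
  rw [← lintegral_const_mul' _ _ ENNReal.ofReal_ne_top]
  refine setLIntegral_congr_fun (MeasurableSet.univ_pi fun _ => measurableSet_Icc)
    (fun x hx => ?_)
  have hP : ∏ k ∈ Icc 1 m, ent x k ^ (if k = m + 1 then c (m+1) else a k) *
      (1 - ent x k) ^ (if k = m + 1 then a (m+1) + b (m+1) - c (m+1) else b k) =
      ∏ k ∈ Icc 1 m, ent x k ^ a k * (1 - ent x k) ^ b k := by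
    refine Finset.prod_congr rfl fun k hk => ?_
    rw [if_neg (hne k hk), if_neg (hne k hk)]
  have hQ : ∏ k ∈ Icc 2 m, delta x k ^ (if k = m + 1 then a (m+1) else c k) =
      ∏ k ∈ Icc 2 m, delta x k ^ c k := by
    refine Finset.prod_congr rfl fun k hk => ?_
    rw [if_neg (hne2 k hk)]
  rw [hP, hQ]
  rw [Jint_swap A B C D hS (delta_mem_of_cube hx m)]
  ring

end
end

section
/- For all integers a, b, c ≥ 0 with a + b − c ≥ 0 and every real β > −1, one has ∫_0^1 x^a (1−x)^b / (1+βx)^{c+1} dx = (a! b!)/(c! (a+b−c)!) · ∫_0^1 x^c (1−x)^{a+b−c} / (1+βx)^{a+1} dx. -/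
open MeasureTheory Finset
open scoped ENNReal

noncomputable section

lemma pos_aux {w x : ℝ} (hw : -1 < w) (hx0 : 0 ≤ x) (hx1 : x ≤ 1) : 0 < 1 + w * x := by
  rcases le_total 0 w with h | h
  · nlinarith
  · nlinarith

lemma betaNat (p q : ℕ) : ∫ x in (0:ℝ)..1, x ^ p * (1 - x) ^ q
    = (Nat.factorial p * Nat.factorial q : ℝ) / Nat.factorial (p + q + 1) := by
  induction q generalizing p with
  | zero =>
      simp only [pow_zero, mul_one, integral_pow, one_pow, Nat.factorial_zero, Nat.cast_one,
        mul_one, Nat.add_zero, Nat.factorial_succ, Nat.cast_mul]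
      rw [zero_pow (by omega)]
      have : (Nat.factorial p : ℝ) ≠ 0 := Nat.cast_ne_zero.mpr p.factorial_ne_zero
      field_simp
      simp
  | succ q ih =>
      have hu : ∀ x ∈ Set.uIcc (0:ℝ) 1, HasDerivAt (fun x : ℝ => x ^ (p+1) / (p+1))
          (x ^ p) x := by
        intro x _
        have h1 : HasDerivAt (fun x : ℝ => x ^ (p+1)) ((p+1) * x ^ p) x := by
          simpa using hasDerivAt_pow (p+1) x
        have := h1.div_const ((p:ℝ)+1)
        have hne : ((p:ℝ)+1) ≠ 0 := by positivity
        exact this.congr_deriv (by field_simp)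
      have hv : ∀ x ∈ Set.uIcc (0:ℝ) 1, HasDerivAt (fun x : ℝ => (1-x) ^ (q+1))
          (-((q+1) * (1-x) ^ q)) x := by
        intro x _
        have h1 : HasDerivAt (fun x : ℝ => 1 - x) (-1) x := by
          simpa using ((hasDerivAt_id x).const_sub 1)
        have := (h1.pow (q+1))
        exact this.congr_deriv (by push_cast; ring)
      have hparts := intervalIntegral.integral_deriv_mul_eq_sub hu hv
        ((continuous_pow p).intervalIntegrable 0 1)
        ((by fun_prop : Continuous fun x : ℝ => -(((q:ℝ)+1) * (1-x) ^ q)).intervalIntegrable 0 1)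
      have hb : (fun x : ℝ => x ^ (p+1) / (p+1)) 1 * (fun x : ℝ => (1-x) ^ (q+1)) 1 -
          (fun x : ℝ => x ^ (p+1) / (p+1)) 0 * (fun x : ℝ => (1-x) ^ (q+1)) 0 = 0 := by
        norm_num
      rw [hb] at hparts
      have hi1 : IntervalIntegrable (fun x : ℝ => x ^ p * (1-x) ^ (q+1)) volume 0 1 :=
        (by fun_prop : Continuous fun x : ℝ => x ^ p * (1-x) ^ (q+1)).intervalIntegrable 0 1
      have hi2 : IntervalIntegrable
          (fun x : ℝ => x ^ (p+1) / (p+1) * -(((q:ℝ)+1) * (1-x) ^ q)) volume 0 1 :=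
        (by fun_prop : Continuous fun x : ℝ =>
          x ^ (p+1) / (p+1) * -(((q:ℝ)+1) * (1-x) ^ q)).intervalIntegrable 0 1
      rw [intervalIntegral.integral_add hi1 hi2] at hparts
      have h2 : (∫ x in (0:ℝ)..1, x ^ (p+1) / (p+1) * -(((q:ℝ)+1) * (1-x) ^ q))
          = -(((q:ℝ)+1)/((p:ℝ)+1)) * ∫ x in (0:ℝ)..1, x ^ (p+1) * (1-x) ^ q := by
        rw [← intervalIntegral.integral_const_mul]
        apply intervalIntegral.integral_congr
        intro x _
        have hne : ((p:ℝ)+1) ≠ 0 := by positivity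
        field_simp
      rw [h2, ih (p+1)] at hparts
      have hfp : (Nat.factorial p : ℝ) ≠ 0 := Nat.cast_ne_zero.mpr p.factorial_ne_zero
      have hfq : (Nat.factorial q : ℝ) ≠ 0 := Nat.cast_ne_zero.mpr q.factorial_ne_zero
      have hfpq : (Nat.factorial (p + q + 2) : ℝ) ≠ 0 :=
        Nat.cast_ne_zero.mpr (p+q+2).factorial_ne_zero
      have e1 : p + 1 + q + 1 = p + q + 2 := by omega
      have e2 : p + (q + 1) + 1 = p + q + 2 := by omega
      rw [e1] at hparts
      rw [Nat.factorial_succ p] at hparts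
      rw [e2, Nat.factorial_succ q]
      push_cast at hparts ⊢
      have hne : ((p:ℝ)+1) ≠ 0 := by positivity
      have hX : (∫ x in (0:ℝ)..1, x ^ p * (1 - x) ^ (q + 1))
          = (((q:ℝ)+1)/((p:ℝ)+1)) * ((((p:ℝ)+1) * (Nat.factorial p : ℝ) * (Nat.factorial q : ℝ))
            / (Nat.factorial (p+q+2) : ℝ)) := by linarith [hparts]
      rw [hX]
      field_simp

lemma key (p q : ℕ) {w : ℝ} (hw : -1 < w) :
    ∫ x in (0:ℝ)..1, x ^ p * (1 - x) ^ q / (1 + w * x) ^ (p + q + 2)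
      = (∫ x in (0:ℝ)..1, x ^ p * (1 - x) ^ q) / (1 + w) ^ (p + 1) := by
  have hw1 : (0:ℝ) < 1 + w := by linarith
  set f : ℝ → ℝ := fun x => (1 + w) * x / (1 + w * x) with hf
  set f' : ℝ → ℝ := fun x => (1 + w) / (1 + w * x) ^ 2 with hf'
  have hmem : ∀ x ∈ Set.uIcc (0:ℝ) 1, 0 < 1 + w * x := by
    intro x hx
    rw [Set.uIcc_of_le zero_le_one] at hx
    exact pos_aux hw hx.1 hx.2
  have hderiv : ∀ x ∈ Set.uIcc (0:ℝ) 1, HasDerivAt f (f' x) x := by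
    intro x hx
    have hne := (hmem x hx).ne'
    have h1 : HasDerivAt (fun x : ℝ => (1 + w) * x) (1 + w) x := by
      simpa using (hasDerivAt_id x).const_mul (1 + w)
    have h2 : HasDerivAt (fun x : ℝ => 1 + w * x) w x := by
      simpa using ((hasDerivAt_id x).const_mul w).const_add 1
    have := h1.div h2 hne
    exact this.congr_deriv (by simp only [hf']; field_simp; ring)
  have hcont : ContinuousOn f' (Set.uIcc (0:ℝ) 1) := by
    apply ContinuousOn.div continuousOn_const (by fun_prop)
    intro x hx
    exact pow_ne_zero _ (hmem x hx).ne'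
  have hg : Continuous fun u : ℝ => u ^ p * (1 - u) ^ q := by fun_prop
  have hsub := intervalIntegral.integral_comp_smul_deriv hderiv hcont hg
  have hf0 : f 0 = 0 := by simp [hf]
  have hf1 : f 1 = 1 := by
    simp only [hf, mul_one]
    field_simp
  rw [hf0, hf1] at hsub
  have hptw : ∀ x ∈ Set.uIcc (0:ℝ) 1,
      f' x • ((fun u : ℝ => u ^ p * (1 - u) ^ q) ∘ f) x
        = (1 + w) ^ (p + 1) * (x ^ p * (1 - x) ^ q / (1 + w * x) ^ (p + q + 2)) := by
    intro x hx
    have hd := hmem x hx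
    have hne := hd.ne'
    have h1fx : 1 - f x = (1 - x) / (1 + w * x) := by
      rw [hf]
      field_simp
      ring
    simp only [Function.comp, smul_eq_mul, hf', hf, h1fx, mul_pow, div_pow]
    rw [show (1:ℝ) - (1 + w) * x / (1 + w * x) = (1 - x) / (1 + w * x) from h1fx, div_pow,
      pow_add, pow_add]
    field_simp
    ring
  rw [intervalIntegral.integral_congr hptw, intervalIntegral.integral_const_mul] at hsub
  rw [eq_div_iff (by positivity : ((1:ℝ) + w) ^ (p + 1) ≠ 0)]
  rw [← hsub]
  ring

theorem stmt19 (a b c : ℕ) (h : c ≤ a + b) (β : ℝ) (hβ : -1 < β) :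
    ∫ x in (0:ℝ)..1, x ^ a * (1 - x) ^ b / (1 + β * x) ^ (c + 1) =
      (Nat.factorial a * Nat.factorial b : ℝ) /
          (Nat.factorial c * Nat.factorial (a + b - c)) *
        ∫ x in (0:ℝ)..1, x ^ c * (1 - x) ^ (a + b - c) / (1 + β * x) ^ (a + 1) := by
  set A := a + b - c with hAdef
  have hA : c + A = a + b := Nat.add_sub_cancel' h
  set F : ℝ → ℝ → ℝ := fun s t =>
    s ^ c * (1 - s) ^ A * (t ^ a * (1 - t) ^ b) / (1 + β * (s * t)) ^ (a + b + 2) with hF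
  -- bound on β * x for x in [0,1]
  have hβx : ∀ x : ℝ, 0 ≤ x → x ≤ 1 → -1 < β * x := by
    intro x h0 h1
    rcases le_total 0 β with hs | hs
    · nlinarith
    · nlinarith
  -- continuity / integrability of F on the unit square
  have hcont : ContinuousOn (fun p : ℝ × ℝ => F p.1 p.2)
      (Set.Icc (0:ℝ) 1 ×ˢ Set.Icc (0:ℝ) 1) := by
    apply ContinuousOn.div (by fun_prop) (by fun_prop)
    rintro ⟨s, t⟩ ⟨hs, ht⟩
    have h0 : 0 ≤ s * t := mul_nonneg hs.1 ht.1
    have h1 : s * t ≤ 1 := mul_le_one₀ hs.2 ht.1 ht.2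
    exact pow_ne_zero _ (pos_aux hβ h0 h1).ne'
  have hInt : IntegrableOn (fun p : ℝ × ℝ => F p.1 p.2)
      (Set.Ioc (0:ℝ) 1 ×ˢ Set.Ioc (0:ℝ) 1) := by
    exact (hcont.integrableOn_compact (isCompact_Icc.prod isCompact_Icc)).mono_set
      (Set.prod_mono Set.Ioc_subset_Icc_self Set.Ioc_subset_Icc_self)
  set Bc : ℝ := ∫ x in (0:ℝ)..1, x ^ c * (1 - x) ^ A with hBc
  set Ba : ℝ := ∫ x in (0:ℝ)..1, x ^ a * (1 - x) ^ b with hBa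
  set L : ℝ := ∫ x in (0:ℝ)..1, x ^ a * (1 - x) ^ b / (1 + β * x) ^ (c + 1) with hL
  set R : ℝ := ∫ x in (0:ℝ)..1, x ^ c * (1 - x) ^ A / (1 + β * x) ^ (a + 1) with hR
  -- inner integral over s
  have inner1 : ∀ t ∈ Set.Ioc (0:ℝ) 1,
      (∫ s in Set.Ioc (0:ℝ) 1, F s t) = Bc * (t ^ a * (1 - t) ^ b / (1 + β * t) ^ (c + 1)) := by
    intro t ht
    have hwt : -1 < β * t := hβx t ht.1.le ht.2
    rw [← intervalIntegral.integral_of_le zero_le_one]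
    have : (fun s => F s t) = fun s =>
        t ^ a * (1 - t) ^ b * (s ^ c * (1 - s) ^ A / (1 + (β * t) * s) ^ (c + A + 2)) := by
      funext s
      simp only [hF]
      have h1 : 1 + β * (s * t) = 1 + β * t * s := by ring
      rw [h1, hA]
      ring
    rw [this, intervalIntegral.integral_const_mul, key c A hwt, ← hBc]
    ring
  have inner2 : ∀ s ∈ Set.Ioc (0:ℝ) 1,
      (∫ t in Set.Ioc (0:ℝ) 1, F s t) = Ba * (s ^ c * (1 - s) ^ A / (1 + β * s) ^ (a + 1)) := by
    intro s hs
    have hws : -1 < β * s := hβx s hs.1.le hs.2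
    rw [← intervalIntegral.integral_of_le zero_le_one]
    have : (fun t => F s t) = fun t =>
        s ^ c * (1 - s) ^ A * (t ^ a * (1 - t) ^ b / (1 + (β * s) * t) ^ (a + b + 2)) := by
      funext t
      simp only [hF]
      have h1 : 1 + β * (s * t) = 1 + β * s * t := by ring
      rw [h1]
      ring
    rw [this, intervalIntegral.integral_const_mul, key a b hws, ← hBa]
    ring
  -- Fubini
  have hswap : (∫ t in Set.Ioc (0:ℝ) 1, ∫ s in Set.Ioc (0:ℝ) 1, F s t)
      = ∫ s in Set.Ioc (0:ℝ) 1, ∫ t in Set.Ioc (0:ℝ) 1, F s t := by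
    apply MeasureTheory.integral_integral_swap
    rw [Measure.prod_restrict]
    have hcont2 : ContinuousOn (fun p : ℝ × ℝ => F p.2 p.1)
        (Set.Icc (0:ℝ) 1 ×ˢ Set.Icc (0:ℝ) 1) := by
      apply hcont.comp continuous_swap.continuousOn
      intro x hx
      exact ⟨hx.2, hx.1⟩
    have hInt2 : IntegrableOn (fun p : ℝ × ℝ => F p.2 p.1)
        (Set.Ioc (0:ℝ) 1 ×ˢ Set.Ioc (0:ℝ) 1) :=
      (hcont2.integrableOn_compact (isCompact_Icc.prod isCompact_Icc)).mono_set
        (Set.prod_mono Set.Ioc_subset_Icc_self Set.Ioc_subset_Icc_self)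
    exact hInt2
  have hE1 : (∫ t in Set.Ioc (0:ℝ) 1, ∫ s in Set.Ioc (0:ℝ) 1, F s t) = Bc * L := by
    rw [setIntegral_congr_fun measurableSet_Ioc inner1, MeasureTheory.integral_const_mul,
      hL, ← intervalIntegral.integral_of_le zero_le_one]
  have hE2 : (∫ s in Set.Ioc (0:ℝ) 1, ∫ t in Set.Ioc (0:ℝ) 1, F s t) = Ba * R := by
    rw [setIntegral_congr_fun measurableSet_Ioc inner2, MeasureTheory.integral_const_mul,
      hR, ← intervalIntegral.integral_of_le zero_le_one]
  have hD : Bc * L = Ba * R := by rw [← hE1, hswap, hE2]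
  have hBcv : Bc = (Nat.factorial c * Nat.factorial A : ℝ) / Nat.factorial (a + b + 1) := by
    have e : c + A + 1 = a + b + 1 := by omega
    rw [hBc, betaNat, e]
  have hBav : Ba = (Nat.factorial a * Nat.factorial b : ℝ) / Nat.factorial (a + b + 1) := by
    rw [hBa, betaNat]
  have hN : (Nat.factorial (a + b + 1) : ℝ) ≠ 0 := Nat.cast_ne_zero.mpr (Nat.factorial_ne_zero _)
  have hfc : (Nat.factorial c : ℝ) ≠ 0 := Nat.cast_ne_zero.mpr (Nat.factorial_ne_zero _)
  have hfA : (Nat.factorial A : ℝ) ≠ 0 := Nat.cast_ne_zero.mpr (Nat.factorial_ne_zero _)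
  rw [hBcv, hBav] at hD
  have hD' : (Nat.factorial c : ℝ) * (Nat.factorial A : ℝ) * L
      = (Nat.factorial a : ℝ) * (Nat.factorial b : ℝ) * R := by
    field_simp at hD
    linear_combination hD
  rw [div_mul_eq_mul_div, eq_div_iff (by positivity : ((Nat.factorial c : ℝ) *
    (Nat.factorial A : ℝ)) ≠ 0)]
  linear_combination hD'

end
end
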